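/- arXiv:1610.05827 — 2 statements merged into one kernel-verified Lean document; each statement's English description precedes it below -/
import Mathlib

section
/- Let (λ_k)_{k∈ℕ} be a sequence of positive reals with λ_k → λ > 0 and let b > 0. Then lim_{n→∞} (∑_{k=0}^n C(n,k) λ_k^k b^{n-k})^{1/n} = λ + b. -/
open Filter Finset

private lemma ev_lt_one (K x y : ℝ) (N : ℕ) (hx : 0 ≤ x) (hx1 : x < 1)
    (hy : 0 ≤ y) (hy1 : y < 1) :
    ∀ᶠ n : ℕ in atTop, K * (n : ℝ) ^ N * x ^ n + y ^ n < 1 := by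
  have h1 : Tendsto (fun n : ℕ => K * ((n : ℝ) ^ N * x ^ n) + y ^ n) atTop
      (nhds (K * 0 + 0)) :=
    ((tendsto_pow_const_mul_const_pow_of_lt_one N hx hx1).const_mul K).add
      (tendsto_pow_atTop_nhds_zero_of_lt_one hy hy1)
  simp only [mul_zero, add_zero] at h1
  filter_upwards [h1.eventually (eventually_lt_nhds (by norm_num : (0:ℝ) < 1))] with n hn
  calc K * (n : ℝ) ^ N * x ^ n + y ^ n = K * ((n : ℝ) ^ N * x ^ n) + y ^ n := by ring
  _ < 1 := hn

/-- Bound on the first `N` terms. -/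
private lemma head_bound (g : ℕ → ℝ) (hg : ∀ k, 0 ≤ g k) (b : ℝ) (hb : 0 < b)
    (N n : ℕ) (hn : N ≤ n) (hn1 : 1 ≤ n) :
    ∑ k ∈ range N, (n.choose k : ℝ) * g k * b ^ (n - k) ≤
      ((max 1 b⁻¹) ^ N * ∑ k ∈ range N, g k) * (n : ℝ) ^ N * b ^ n := by
  have hmax : (1:ℝ) ≤ max 1 b⁻¹ := le_max_left _ _
  calc ∑ k ∈ range N, (n.choose k : ℝ) * g k * b ^ (n - k)
      ≤ ∑ k ∈ range N, ((n : ℝ) ^ N * g k * ((max 1 b⁻¹) ^ N * b ^ n)) := by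
        apply Finset.sum_le_sum
        intro k hk
        rw [Finset.mem_range] at hk
        have hkn : k ≤ n := le_trans (le_of_lt hk) hn
        have h1 : (n.choose k : ℝ) ≤ (n : ℝ) ^ N := by
          calc (n.choose k : ℝ) ≤ (n : ℝ) ^ k := by
                exact_mod_cast Nat.choose_le_pow n k
          _ ≤ (n : ℝ) ^ N := by
                apply pow_le_pow_right₀ (by exact_mod_cast hn1) hk.le
        have h2 : b ^ (n - k) ≤ (max 1 b⁻¹) ^ N * b ^ n := by
          have hbk : b ^ (n - k) * b ^ k = b ^ n := by
            rw [← pow_add]; congr 1; omega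
          have hb2 : b ^ (n - k) = b ^ n * (b⁻¹) ^ k := by
            rw [← hbk, mul_assoc, ← mul_pow, mul_inv_cancel₀ hb.ne', one_pow, mul_one]
          rw [hb2]
          have : (b⁻¹ : ℝ) ^ k ≤ (max 1 b⁻¹) ^ N := by
            calc (b⁻¹ : ℝ) ^ k ≤ (max 1 b⁻¹) ^ k :=
                  pow_le_pow_left₀ (by positivity) (le_max_right _ _) k
            _ ≤ (max 1 b⁻¹) ^ N := pow_le_pow_right₀ hmax hk.le
          calc b ^ n * (b⁻¹ : ℝ) ^ k ≤ b ^ n * (max 1 b⁻¹) ^ N := by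
                apply mul_le_mul_of_nonneg_left this (by positivity)
          _ = (max 1 b⁻¹) ^ N * b ^ n := by ring
        calc (n.choose k : ℝ) * g k * b ^ (n - k)
            ≤ (n : ℝ) ^ N * g k * b ^ (n - k) := by
              apply mul_le_mul_of_nonneg_right (mul_le_mul_of_nonneg_right h1 (hg k))
                (by positivity)
        _ ≤ (n : ℝ) ^ N * g k * ((max 1 b⁻¹) ^ N * b ^ n) := by
              apply mul_le_mul_of_nonneg_left h2 (mul_nonneg (by positivity) (hg k))
  _ = ((max 1 b⁻¹) ^ N * ∑ k ∈ range N, g k) * (n : ℝ) ^ N * b ^ n := by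
        rw [← Finset.sum_mul, ← Finset.mul_sum]
        ring

/-- If `λ_k → λ > 0` and `b > 0`, then
`(∑_{k=0}^n C(n,k) λ_k^k b^{n-k})^{1/n} → λ + b`. -/
theorem perturbed_binomial_limit (lam : ℕ → ℝ) (l b : ℝ)
    (hpos : ∀ k, 0 < lam k) (hl : 0 < l) (hb : 0 < b)
    (hlim : Tendsto lam atTop (nhds l)) :
    Tendsto (fun n : ℕ =>
        (∑ k ∈ range (n + 1), (n.choose k : ℝ) * lam k ^ k * b ^ (n - k)) ^ (1 / (n : ℝ)))
      atTop (nhds (l + b)) := by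
  set S : ℕ → ℝ := fun n => ∑ k ∈ range (n + 1), (n.choose k : ℝ) * lam k ^ k * b ^ (n - k)
    with hS
  have hSpos : ∀ n, 0 < S n := by
    intro n
    apply Finset.sum_pos
    · intro k hk
      rw [Finset.mem_range] at hk
      have h1 : (0:ℝ) < n.choose k := by exact_mod_cast Nat.choose_pos (show k ≤ n by omega)
      exact mul_pos (mul_pos h1 (pow_pos (hpos k) k)) (pow_pos hb _)
    · exact ⟨0, by simp⟩
  have hroot : ∀ (n : ℕ), 1 ≤ n → ∀ a : ℝ, 0 < a → S n < a ^ n →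
      S n ^ (1 / (n : ℝ)) < a := by
    intro n hn a ha hlt
    have : S n ^ (1 / (n : ℝ)) < (a ^ n) ^ (1 / (n : ℝ)) :=
      Real.rpow_lt_rpow (hSpos n).le hlt (by positivity)
    rw [one_div, Real.pow_rpow_inv_natCast ha.le (by omega)] at this
    rwa [one_div]
  have hroot' : ∀ (n : ℕ), 1 ≤ n → ∀ a : ℝ, 0 < a → a ^ n < S n →
      a < S n ^ (1 / (n : ℝ)) := by
    intro n hn a ha hlt
    have : (a ^ n) ^ (1 / (n : ℝ)) < S n ^ (1 / (n : ℝ)) :=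
      Real.rpow_lt_rpow (by positivity) hlt (by positivity)
    rw [one_div, Real.pow_rpow_inv_natCast ha.le (by omega)] at this
    rwa [one_div]
  rw [tendsto_order]
  constructor
  · -- lower bound: ∀ a < l + b, eventually a < S n ^ (1/n)
    intro a ha
    rcases le_or_gt a 0 with ha0 | ha0
    · filter_upwards [eventually_ge_atTop 1] with n _
      exact lt_of_le_of_lt ha0 (Real.rpow_pos_of_pos (hSpos n) _)
    · set ε : ℝ := min (l / 2) ((l + b - a) / 2) with hε
      have hε0 : 0 < ε := by
        apply lt_min (by linarith)
        linarith
      have hεl : ε < l := lt_of_le_of_lt (min_le_left _ _) (by linarith)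
      set c : ℝ := l - ε + b with hc
      have hac : a < c := by
        have : ε ≤ (l + b - a) / 2 := min_le_right _ _
        simp only [hc]; linarith
      have hbc : b < c := by simp only [hc]; linarith
      have hc0 : 0 < c := lt_trans hb hbc
      -- N such that lam k ≥ l - ε for k ≥ N
      obtain ⟨N, hN⟩ := (hlim.eventually (eventually_ge_nhds (show l - ε < l by linarith))).exists_forall_of_atTop
      set K : ℝ := (max 1 b⁻¹) ^ N * ∑ k ∈ range N, (l - ε) ^ k with hK
      have key : ∀ n, N ≤ n → 1 ≤ n → c ^ n - K * (n : ℝ) ^ N * b ^ n ≤ S n := by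
        intro n hn hn1
        have hsplit : ∑ k ∈ range N, (n.choose k : ℝ) * (l - ε) ^ k * b ^ (n - k)
            + ∑ k ∈ Ico N (n + 1), (n.choose k : ℝ) * (l - ε) ^ k * b ^ (n - k)
            = ∑ k ∈ range (n + 1), (n.choose k : ℝ) * (l - ε) ^ k * b ^ (n - k) :=
          Finset.sum_range_add_sum_Ico _ (by omega)
        have hfull : ∑ k ∈ range (n + 1), (n.choose k : ℝ) * (l - ε) ^ k * b ^ (n - k)
            = c ^ n := by
          rw [hc, add_pow]
          apply Finset.sum_congr rfl
          intro k _; ring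
        have hhead : ∑ k ∈ range N, (n.choose k : ℝ) * (l - ε) ^ k * b ^ (n - k)
            ≤ K * (n : ℝ) ^ N * b ^ n := by
          exact head_bound (fun k => (l - ε) ^ k) (fun k => pow_nonneg (by linarith) k) b hb N n hn hn1
        have htail : ∑ k ∈ Ico N (n + 1), (n.choose k : ℝ) * (l - ε) ^ k * b ^ (n - k)
            ≤ S n := by
          calc ∑ k ∈ Ico N (n + 1), (n.choose k : ℝ) * (l - ε) ^ k * b ^ (n - k)
              ≤ ∑ k ∈ Ico N (n + 1), (n.choose k : ℝ) * lam k ^ k * b ^ (n - k) := by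
                apply Finset.sum_le_sum
                intro k hk
                rw [Finset.mem_Ico] at hk
                have : (l - ε) ^ k ≤ lam k ^ k :=
                  pow_le_pow_left₀ (by linarith) (hN k hk.1) k
                have h1 : 0 ≤ (n.choose k : ℝ) := by positivity
                have h2 : 0 ≤ b ^ (n - k) := by positivity
                exact mul_le_mul_of_nonneg_right (mul_le_mul_of_nonneg_left this h1) h2
          _ ≤ S n := by
                rw [hS]
                apply Finset.sum_le_sum_of_subset_of_nonneg
                · intro k hk; rw [Finset.mem_Ico] at hk; rw [Finset.mem_range]; omega
                · intro k hk _
                  have := (hpos k).le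
                  positivity
        linarith
      have hK0 : 0 ≤ K := by
        rw [hK]
        apply mul_nonneg (by positivity)
        apply Finset.sum_nonneg; intro k _; exact pow_nonneg (by linarith) k
      have hev := ev_lt_one K (b / c) (a / c) N (div_nonneg hb.le hc0.le)
        ((div_lt_one hc0).2 hbc) (div_nonneg ha0.le hc0.le) ((div_lt_one hc0).2 hac)
      filter_upwards [hev, eventually_ge_atTop N, eventually_ge_atTop 1] with n hn hnN hn1
      apply hroot' n hn1 a ha0
      have h1 : K * (n : ℝ) ^ N * (b / c) ^ n + (a / c) ^ n < 1 := hn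
      have h2 : K * (n : ℝ) ^ N * b ^ n + a ^ n < c ^ n := by
        have := mul_lt_mul_of_pos_right h1 (show (0:ℝ) < c ^ n by positivity)
        rw [one_mul] at this
        calc K * (n : ℝ) ^ N * b ^ n + a ^ n
            = (K * (n : ℝ) ^ N * (b / c) ^ n + (a / c) ^ n) * c ^ n := by
              have hc' : c ^ n ≠ 0 := by positivity
              rw [div_pow, div_pow, add_mul, div_mul_cancel₀ _ hc', ← mul_div_assoc,
                div_mul_cancel₀ _ hc']
        _ < c ^ n := this
      have := key n hnN hn1
      linarith
  · -- upper bound: ∀ a > l + b, eventually S n ^ (1/n) < a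
    intro a ha
    have ha0 : 0 < a := by linarith
    set ε : ℝ := (a - l - b) / 2 with hε
    have hε0 : 0 < ε := by linarith
    set c : ℝ := l + ε + b with hc
    have hca : c < a := by simp only [hc, hε]; linarith
    have hbc : b < c := by simp only [hc]; linarith
    have hc0 : 0 < c := lt_trans hb hbc
    obtain ⟨N, hN⟩ := (hlim.eventually (eventually_le_nhds (show l < l + ε by linarith))).exists_forall_of_atTop
    set K : ℝ := (max 1 b⁻¹) ^ N * ∑ k ∈ range N, lam k ^ k with hK
    have key : ∀ n, N ≤ n → 1 ≤ n → S n ≤ K * (n : ℝ) ^ N * b ^ n + c ^ n := by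
      intro n hn hn1
      have hsplit : ∑ k ∈ range N, (n.choose k : ℝ) * lam k ^ k * b ^ (n - k)
          + ∑ k ∈ Ico N (n + 1), (n.choose k : ℝ) * lam k ^ k * b ^ (n - k) = S n :=
        Finset.sum_range_add_sum_Ico _ (by omega)
      have hhead : ∑ k ∈ range N, (n.choose k : ℝ) * lam k ^ k * b ^ (n - k)
          ≤ K * (n : ℝ) ^ N * b ^ n :=
        head_bound (fun k => lam k ^ k) (fun k => by have := (hpos k).le; positivity)
          b hb N n hn hn1
      have htail : ∑ k ∈ Ico N (n + 1), (n.choose k : ℝ) * lam k ^ k * b ^ (n - k)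
          ≤ c ^ n := by
        calc ∑ k ∈ Ico N (n + 1), (n.choose k : ℝ) * lam k ^ k * b ^ (n - k)
            ≤ ∑ k ∈ Ico N (n + 1), (n.choose k : ℝ) * (l + ε) ^ k * b ^ (n - k) := by
              apply Finset.sum_le_sum
              intro k hk
              rw [Finset.mem_Ico] at hk
              have : lam k ^ k ≤ (l + ε) ^ k :=
                pow_le_pow_left₀ (hpos k).le (hN k hk.1) k
              have h1 : 0 ≤ (n.choose k : ℝ) := by positivity
              have h2 : 0 ≤ b ^ (n - k) := by positivity
              exact mul_le_mul_of_nonneg_right (mul_le_mul_of_nonneg_left this h1) h2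
        _ ≤ ∑ k ∈ range (n + 1), (n.choose k : ℝ) * (l + ε) ^ k * b ^ (n - k) := by
              apply Finset.sum_le_sum_of_subset_of_nonneg
              · intro k hk; rw [Finset.mem_Ico] at hk; rw [Finset.mem_range]; omega
              · intro k hk _; positivity
        _ = c ^ n := by
              rw [hc, add_pow]
              apply Finset.sum_congr rfl
              intro k _; ring
      linarith
    have hev := ev_lt_one K (b / a) (c / a) N (div_nonneg hb.le ha0.le)
      ((div_lt_one ha0).2 (lt_trans hbc hca)) (div_nonneg hc0.le ha0.le) ((div_lt_one ha0).2 hca)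
    filter_upwards [hev, eventually_ge_atTop N, eventually_ge_atTop 1] with n hn hnN hn1
    apply hroot n hn1 a ha0
    have h2 : K * (n : ℝ) ^ N * b ^ n + c ^ n < a ^ n := by
      have := mul_lt_mul_of_pos_right hn (show (0:ℝ) < a ^ n by positivity)
      rw [one_mul] at this
      calc K * (n : ℝ) ^ N * b ^ n + c ^ n
          = (K * (n : ℝ) ^ N * (b / a) ^ n + (c / a) ^ n) * a ^ n := by
            have ha' : a ^ n ≠ 0 := by positivity
            rw [div_pow, div_pow, add_mul, div_mul_cancel₀ _ ha', ← mul_div_assoc,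
              div_mul_cancel₀ _ ha']
      _ < a ^ n := this
    have := key n hnN hn1
    linarith
end

section
/- Suppose d : ℕ → ℝ and (a_i) are sequences with constants C₀, C₁, C₂ > 0 and lengths l_i ≥ 0 such that 2·log⁺(a_i) + C₁ ≤ l_i for all i and ∑_{i=1}^n l_i ≤ d(n) ≤ ∑_{i=1}^n l_i + C₀ for all n. If d(n) → ∞, then limsup_{n→∞} [2∑_{i=1}^n log⁺(a_i)] / d(n) ≤ 1. -/
open Filter Finset

noncomputable def logPlus (x : ℝ) : ℝ := max (Real.log x) 0

/-- If `2 log⁺ a_i + C₁ ≤ l_i` and `∑_{i=1}^n l_i ≤ d n ≤ ∑_{i=1}^n l_i + C₀` with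
`d n → ∞`, then `limsup_n (2 ∑_{i=1}^n log⁺ a_i) / d n ≤ 1`. -/
theorem mean_cusp_winding_le_one (d : ℕ → ℝ) (a l : ℕ → ℝ)
    (C₀ C₁ C₂ : ℝ) (hC₀ : 0 < C₀) (hC₁ : 0 < C₁) (hC₂ : 0 < C₂)
    (hl : ∀ i, 0 ≤ l i)
    (hlb : ∀ i, 2 * logPlus (a i) + C₁ ≤ l i)
    (hd : ∀ n, (∑ i ∈ Icc 1 n, l i) ≤ d n ∧ d n ≤ (∑ i ∈ Icc 1 n, l i) + C₀)
    (hdiv : Tendsto d atTop atTop) :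
    limsup (fun n : ℕ => (2 * ∑ i ∈ Icc 1 n, logPlus (a i)) / d n) atTop ≤ 1 := by
  have hev : ∀ᶠ n in atTop, (2 * ∑ i ∈ Icc 1 n, logPlus (a i)) / d n ≤ 1 := by
    filter_upwards [hdiv.eventually_gt_atTop 0] with n hdn
    have hnum : 2 * ∑ i ∈ Icc 1 n, logPlus (a i) ≤ d n := by
      calc 2 * ∑ i ∈ Icc 1 n, logPlus (a i)
          = ∑ i ∈ Icc 1 n, 2 * logPlus (a i) := by rw [mul_sum]
        _ ≤ ∑ i ∈ Icc 1 n, l i := by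
            refine sum_le_sum fun i _ => ?_
            linarith [hlb i]
        _ ≤ d n := (hd n).1
    exact div_le_one_of_le₀ hnum hdn.le
  refine limsup_le_of_le ?_ hev
  refine isCoboundedUnder_le_of_eventually_le atTop (x := 0) ?_
  filter_upwards [hdiv.eventually_gt_atTop 0] with n hdn
  have hnum : 0 ≤ 2 * ∑ i ∈ Icc 1 n, logPlus (a i) := by
    have : 0 ≤ ∑ i ∈ Icc 1 n, logPlus (a i) :=
      sum_nonneg fun i _ => le_max_right _ _
    linarith
  exact div_nonneg hnum hdn.le
end
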